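/- Let K₁, K₂, C₁₁₁, C₁₁₂, C₁₂₂, C₂₂₂ ∈ ℝ with 0 < K₂ < K₁ < 1. For u ∈ ℝ⁴ define d₁(u) = K₁ + 6C₁₁₁·u¹ + 2C₁₁₂·u², d₂(u) = K₂ + 2C₁₂₂·u¹ + 6C₂₂₂·u², c(u) = 2C₁₁₂·u¹ + 2C₁₂₂·u², let a(u) be the 4×4 matrix with rows (0,0,0,1), (0,0,−1,0), (−c(u),−d₂(u),0,0), (d₁(u),c(u),0,0), and set m(u) = (d₁(u)+d₂(u))/2, R(u) = √( ((d₁(u)−d₂(u))/2)² + c(u)² ). Then there exists δ > 0 such that for every u ∈ ℝ⁴ with |u| < 2δ: 0 < m(u) − R(u) < (K₁+K₂)/2 < m(u) + R(u) < 1, and the four numbers √(m(u)+R(u)), √(m(u)−R(u)), −√(m(u)−R(u)), −√(m(u)+R(u)) are pairwise distinct real eigenvalues of a(u), all lying in the open interval (−1,1). -/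

import Mathlib

open Matrix

set_option maxHeartbeats 1000000 in
/-- Uniform strict hyperbolicity of the plane-wave crystal system (Lemma 4.1):
for a birefringent crystal (0 < K₂ < K₁ < 1), on a small ball around the
trivial state the matrix `a(u)` has four pairwise distinct real eigenvalues
`±√(m(u)±R(u))`, all in (−1,1). -/
theorem uniform_strict_hyperbolicity
    (K₁ K₂ C111 C112 C122 C222 : ℝ)
    (hK₂ : 0 < K₂) (hK : K₂ < K₁) (hK₁ : K₁ < 1) :
    ∃ δ > (0:ℝ), ∀ u : EuclideanSpace ℝ (Fin 4), ‖u‖ < 2 * δ →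
      let d₁ := K₁ + 6 * C111 * u 0 + 2 * C112 * u 1
      let d₂ := K₂ + 2 * C122 * u 0 + 6 * C222 * u 1
      let c := 2 * C112 * u 0 + 2 * C122 * u 1
      let m := (d₁ + d₂) / 2
      let R := Real.sqrt (((d₁ - d₂) / 2) ^ 2 + c ^ 2)
      let A : Matrix (Fin 4) (Fin 4) ℝ :=
        !![0, 0, 0, 1; 0, 0, -1, 0; -c, -d₂, 0, 0; d₁, c, 0, 0]
      (0 < m - R ∧ m - R < (K₁ + K₂) / 2 ∧
        (K₁ + K₂) / 2 < m + R ∧ m + R < 1) ∧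
      List.Pairwise (· ≠ ·)
        [Real.sqrt (m + R), Real.sqrt (m - R), -Real.sqrt (m - R), -Real.sqrt (m + R)] ∧
      ∀ lam ∈ [Real.sqrt (m + R), Real.sqrt (m - R),
          -Real.sqrt (m - R), -Real.sqrt (m + R)],
        Matrix.det (lam • (1 : Matrix (Fin 4) (Fin 4) ℝ) - A) = 0 ∧
        lam ∈ Set.Ioo (-1:ℝ) 1 := by
  set M : ℝ := 6 * |C111| + 2 * |C112| + 2 * |C122| + 6 * |C222| + 1 with hMdef
  have hM1 : (1:ℝ) ≤ M := by
    have := abs_nonneg C111; have := abs_nonneg C112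
    have := abs_nonneg C122; have := abs_nonneg C222
    simp only [hMdef]; linarith
  have hM0 : (0:ℝ) < M := lt_of_lt_of_le one_pos hM1
  set ε : ℝ := min (min ((K₁ - K₂) / 4) ((1 - K₁) / 3)) (K₂ / 2) with hεdef
  have hε1 : ε ≤ (K₁ - K₂) / 4 := le_trans (min_le_left _ _) (min_le_left _ _)
  have hε2 : ε ≤ (1 - K₁) / 3 := le_trans (min_le_left _ _) (min_le_right _ _)
  have hε3 : ε ≤ K₂ / 2 := min_le_right _ _
  have hε0 : 0 < ε := by
    simp only [hεdef, lt_min_iff]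
    refine ⟨⟨by linarith, by linarith⟩, by linarith⟩
  refine ⟨ε / (2 * M), by positivity, ?_⟩
  intro u hu
  have hnorm : M * ‖u‖ < ε := by
    have h : ‖u‖ < ε / M := by
      have : 2 * (ε / (2 * M)) = ε / M := by field_simp
      linarith [this ▸ hu]
    calc M * ‖u‖ < M * (ε / M) := by exact (mul_lt_mul_iff_right₀ hM0).2 h
    _ = ε := by field_simp
  have hcoord : ∀ i : Fin 4, |u i| ≤ ‖u‖ := by
    intro i
    rw [EuclideanSpace.norm_eq]
    have h1 : |u i| = Real.sqrt (‖u i‖ ^ 2) := by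
      rw [Real.sqrt_sq (norm_nonneg _), Real.norm_eq_abs]
    rw [h1]
    exact Real.sqrt_le_sqrt (Finset.single_le_sum
      (fun j _ => sq_nonneg (‖u j‖)) (Finset.mem_univ i))
  have h0 := hcoord 0
  have h1 := hcoord 1
  have hun : 0 ≤ ‖u‖ := norm_nonneg u
  have habs : ∀ a b : ℝ, |a| + |b| + 1 ≤ M →
      |a * u 0 + b * u 1| < ε := by
    intro a b hab
    have e1 : |a * u 0 + b * u 1| ≤ |a| * |u 0| + |b| * |u 1| := by
      calc |a * u 0 + b * u 1| ≤ |a * u 0| + |b * u 1| := abs_add_le _ _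
      _ = |a| * |u 0| + |b| * |u 1| := by rw [abs_mul, abs_mul]
    have e2 : |a| * |u 0| + |b| * |u 1| ≤ (|a| + |b|) * ‖u‖ := by
      have := abs_nonneg a; have := abs_nonneg b
      nlinarith
    have e3 : (|a| + |b|) * ‖u‖ ≤ M * ‖u‖ := by nlinarith
    linarith
  have hp : |6 * C111 * u 0 + 2 * C112 * u 1| < ε := by
    apply habs
    have := abs_nonneg C122; have := abs_nonneg C222
    rw [abs_mul, abs_mul, abs_of_nonneg (by norm_num : (0:ℝ) ≤ 6),
      abs_of_nonneg (by norm_num : (0:ℝ) ≤ 2)]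
    simp only [hMdef]; linarith
  have hq : |2 * C122 * u 0 + 6 * C222 * u 1| < ε := by
    apply habs
    have := abs_nonneg C111; have := abs_nonneg C112
    rw [abs_mul, abs_mul, abs_of_nonneg (by norm_num : (0:ℝ) ≤ 6),
      abs_of_nonneg (by norm_num : (0:ℝ) ≤ 2)]
    simp only [hMdef]; linarith
  have hc : |2 * C112 * u 0 + 2 * C122 * u 1| < ε := by
    apply habs
    have := abs_nonneg C111; have := abs_nonneg C222
    rw [abs_mul, abs_mul, abs_of_nonneg (by norm_num : (0:ℝ) ≤ 2)]
    simp only [hMdef]; linarith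
  clear_value M ε
  intro d₁ d₂ c m R A
  have hd₁ : d₁ = K₁ + 6 * C111 * u 0 + 2 * C112 * u 1 := rfl
  have hd₂ : d₂ = K₂ + 2 * C122 * u 0 + 6 * C222 * u 1 := rfl
  have hcdef : c = 2 * C112 * u 0 + 2 * C122 * u 1 := rfl
  have hm : m = (d₁ + d₂) / 2 := rfl
  have hRdef : R = Real.sqrt (((d₁ - d₂) / 2) ^ 2 + c ^ 2) := rfl
  have hAdef : A = !![0, 0, 0, 1; 0, 0, -1, 0; -c, -d₂, 0, 0; d₁, c, 0, 0] := rfl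
  clear_value d₁ d₂ c m R A
  obtain ⟨hp1, hp2⟩ := abs_lt.mp hp
  obtain ⟨hq1, hq2⟩ := abs_lt.mp hq
  obtain ⟨hc1, hc2⟩ := abs_lt.mp hc
  have hd₁b : K₁ - ε < d₁ ∧ d₁ < K₁ + ε := ⟨by rw [hd₁]; linarith, by rw [hd₁]; linarith⟩
  have hd₂b : K₂ - ε < d₂ ∧ d₂ < K₂ + ε := ⟨by rw [hd₂]; linarith, by rw [hd₂]; linarith⟩
  have hcb : -ε < c ∧ c < ε := ⟨by rw [hcdef]; linarith, by rw [hcdef]; linarith⟩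
  obtain ⟨hd₁l, hd₁u⟩ := hd₁b
  obtain ⟨hd₂l, hd₂u⟩ := hd₂b
  obtain ⟨hcl, hcu⟩ := hcb
  clear hp hq hc hp1 hp2 hq1 hq2 hc1 hc2 hu hnorm hcoord h0 h1 hun habs hMdef hM1 hM0 hεdef
  clear M
  have hmub : m < (K₁ + K₂) / 2 + ε := by rw [hm]; linarith
  have hmlb : (K₁ + K₂) / 2 - ε < m := by rw [hm]; linarith
  clear hcdef hd₁ hd₂
  clear u
  have hR0 : 0 ≤ R := by rw [hRdef]; exact Real.sqrt_nonneg _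
  have hR2 : R ^ 2 = ((d₁ - d₂) / 2) ^ 2 + c ^ 2 := by
    rw [hRdef]; exact Real.sq_sqrt (by positivity)
  have hc2 : c ^ 2 < ε ^ 2 := by nlinarith
  have hxl : ε < (d₁ - d₂) / 2 := by linarith
  have hRε : ε < R := by nlinarith
  have hmpos : 0 < m := by linarith
  -- 0 < m - R
  have hdd : ε ^ 2 < d₁ * d₂ := by nlinarith
  have hRm : R ^ 2 < m ^ 2 := by
    have : m ^ 2 - R ^ 2 = d₁ * d₂ - c ^ 2 := by rw [hR2, hm]; ring
    nlinarith
  have goal1 : 0 < m - R := by nlinarith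
  -- m - R < (K₁+K₂)/2 < m + R
  have goal2 : m - R < (K₁ + K₂) / 2 := by linarith
  have goal3 : (K₁ + K₂) / 2 < m + R := by linarith
  -- m + R < 1
  have hRub : R < (K₁ - K₂) / 2 + 2 * ε := by nlinarith
  have goal4 : m + R < 1 := by linarith
  have h0mR : 0 ≤ m - R := le_of_lt goal1
  have h0pR : 0 ≤ m + R := by linarith
  have hsp : (Real.sqrt (m + R)) ^ 2 = m + R := Real.sq_sqrt h0pR
  have hsm : (Real.sqrt (m - R)) ^ 2 = m - R := Real.sq_sqrt h0mR
  have hbpos : 0 < Real.sqrt (m - R) := Real.sqrt_pos.mpr goal1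
  have hba : Real.sqrt (m - R) < Real.sqrt (m + R) :=
    Real.sqrt_lt_sqrt h0mR (by linarith)
  have ha1 : Real.sqrt (m + R) < 1 := by
    rw [show (1:ℝ) = Real.sqrt 1 by simp]
    exact Real.sqrt_lt_sqrt h0pR (by linarith)
  refine ⟨⟨goal1, goal2, goal3, goal4⟩, ?_, ?_⟩
  · have ha : 0 < Real.sqrt (m + R) := lt_trans hbpos hba
    refine .cons (fun b hb => ?_) (.cons (fun b hb => ?_) (.cons (fun b hb => ?_)
      (.cons (fun b hb => absurd hb List.not_mem_nil) .nil)))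
    · simp only [List.mem_cons, List.not_mem_nil, or_false] at hb
      rcases hb with rfl | rfl | rfl <;> intro he <;> linarith
    · simp only [List.mem_cons, List.not_mem_nil, or_false] at hb
      rcases hb with rfl | rfl <;> intro he <;> linarith
    · simp only [List.mem_cons, List.not_mem_nil, or_false] at hb
      rcases hb with rfl <;> intro he <;> linarith
  · have hdet : ∀ lam : ℝ, Matrix.det (lam • (1 : Matrix (Fin 4) (Fin 4) ℝ) - A) =
        lam ^ 4 - (d₁ + d₂) * lam ^ 2 + (d₁ * d₂ - c ^ 2) := by
      intro lam
      have hB : lam • (1 : Matrix (Fin 4) (Fin 4) ℝ) - A =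
          !![lam, 0, 0, -1; 0, lam, 1, 0; c, d₂, lam, 0; -d₁, -c, 0, lam] := by
        rw [hAdef]
        ext i j
        fin_cases i <;> fin_cases j <;>
          simp [Matrix.one_apply, Matrix.smul_apply, Matrix.vecHead, Matrix.vecTail] <;> ring
      rw [hB]
      simp [Matrix.det_succ_row_zero, Fin.sum_univ_succ, Matrix.cons_val_succ,
        show ((2 : Fin 3).castSucc : Fin 4) = 2 from rfl,
        show ((1 : Fin 3).castSucc : Fin 4) = 1 from rfl,
        show ((0 : Fin 3).castSucc : Fin 4) = 0 from rfl,
        show ((1 : Fin 2).castSucc : Fin 3) = 1 from rfl,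
        show ((0 : Fin 2).castSucc : Fin 3) = 0 from rfl,
        show ((0 : Fin 1).castSucc : Fin 2) = 0 from rfl,
        show (Fin.succAbove (3 : Fin 4) (2 : Fin 3)) = 2 from rfl]
      ring
    intro lam hlam
    simp only [List.mem_cons, List.not_mem_nil, or_false] at hlam
    have hlam2 : lam ^ 2 = m + R ∨ lam ^ 2 = m - R := by
      rcases hlam with h | h | h | h
      · left; rw [h]; exact hsp
      · right; rw [h]; exact hsm
      · right; rw [h, neg_sq]; exact hsm
      · left; rw [h, neg_sq]; exact hsp
    constructor
    · rw [hdet lam]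
      have hprod : d₁ * d₂ - c ^ 2 = m ^ 2 - R ^ 2 := by rw [hR2, hm]; ring
      have hsum : d₁ + d₂ = 2 * m := by rw [hm]; ring
      rw [hprod, hsum]
      rcases hlam2 with h | h
      · linear_combination (lam ^ 2 - (m - R)) * h
      · linear_combination (lam ^ 2 - (m + R)) * h
    · have hsmn : Real.sqrt (m - R) ≤ Real.sqrt (m + R) := le_of_lt hba
      rcases hlam with h | h | h | h <;> subst h <;>
        constructor <;> first
          | linarith [Real.sqrt_nonneg (m + R), Real.sqrt_nonneg (m - R)]
          | linarith [ha1, hba]
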